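/- For any convex closed set X ⊆ R^n, the function i_X(M) = 1 if Q(M) ∩ X ≠ ∅ and 0 otherwise is a valuation under matroid subdivisions. -/

import Mathlib

open Finset
open scoped Pointwise

/-- The indicator vector `e_B ∈ ℝⁿ` of a subset `B ⊆ [n]`. -/
def indVec (n : ℕ) (B : Finset (Fin n)) : Fin n → ℝ := fun i => if i ∈ B then 1 else 0

/-- A collection of subsets of `[n]` is the collection of bases of a matroid
(possibly the empty matroid) iff it satisfies the basis exchange axiom. -/
def IsBases {n : ℕ} (𝓑 : Finset (Finset (Fin n))) : Prop :=
  ∀ B₁ ∈ 𝓑, ∀ B₂ ∈ 𝓑, ∀ b₁ ∈ B₁ \ B₂, ∃ b₂ ∈ B₂ \ B₁, insert b₂ (B₁.erase b₁) ∈ 𝓑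

/-- The matroid (basis) polytope: convex hull of indicator vectors of the bases. -/
def polytope {n : ℕ} (𝓑 : Finset (Finset (Fin n))) : Set (Fin n → ℝ) :=
  convexHull ℝ (indVec n '' ↑𝓑)

/-- A subdivision of a polytope `P` into polytopes `Ps i`: their union is `P`,
their vertices are vertices of `P`, and each pairwise intersection is a proper
(exposed) face of both pieces. -/
def IsSubdivision {n m : ℕ} (P : Set (Fin n → ℝ)) (Ps : Fin m → Set (Fin n → ℝ)) : Prop :=
  (⋃ i, Ps i) = P ∧
  (∀ i, Set.extremePoints ℝ (Ps i) ⊆ Set.extremePoints ℝ P) ∧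
  ∀ i j, i ≠ j →
    IsExposed ℝ (Ps i) (Ps i ∩ Ps j) ∧ IsExposed ℝ (Ps j) (Ps i ∩ Ps j) ∧
    Ps i ∩ Ps j ≠ Ps i ∧ Ps i ∩ Ps j ≠ Ps j

/-- A matroid subdivision of the matroid `𝓑` into the matroids `𝓜 i`. -/
def IsMatroidSubdivision {n m : ℕ} (𝓑 : Finset (Finset (Fin n)))
    (𝓜 : Fin m → Finset (Finset (Fin n))) : Prop :=
  IsBases 𝓑 ∧ (∀ i, IsBases (𝓜 i)) ∧ IsSubdivision (polytope 𝓑) fun i => polytope (𝓜 i)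

open Classical in
/-- For `A ⊆ [m]`, the matroid `M_A` whose polytope is `⋂_{a ∈ A} Q(M_a)`:
its bases are the bases of `M` whose indicator vector lies in every `Q(M_a)`, `a ∈ A`.
For `A = ∅` this is `M` itself. -/
noncomputable def interMatroid {n m : ℕ} (𝓑 : Finset (Finset (Fin n)))
    (𝓜 : Fin m → Finset (Finset (Fin n))) (A : Finset (Fin m)) : Finset (Finset (Fin n)) :=
  𝓑.filter fun B => ∀ a ∈ A, indVec n B ∈ polytope (𝓜 a)

/-- `f` is a valuation under matroid subdivisions:
`∑_{A ⊆ [m]} (-1)^{|A|} f(M_A) = 0` for every matroid subdivision. -/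
def IsValuation {n : ℕ} {G : Type*} [AddCommGroup G] (f : Finset (Finset (Fin n)) → G) : Prop :=
  ∀ (m : ℕ) (𝓑 : Finset (Finset (Fin n))) (𝓜 : Fin m → Finset (Finset (Fin n))),
    IsMatroidSubdivision 𝓑 𝓜 →
    ∑ A : Finset (Fin m), (-1 : ℤ) ^ A.card • f (interMatroid 𝓑 𝓜 A) = 0

/-! ### Auxiliary results

The main engine is Groemer's theorem (`groemer` below): if finitely many nonempty compact
convex sets have indicator functions that sum to zero pointwise (with integer coefficients),
then the coefficients themselves sum to zero.  This is proved by induction on the dimension,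
slicing along the last coordinate; the base of the induction is the one-dimensional statement
`oneD`, proved by looking at jumps at right endpoints of intervals. -/

/-- One-dimensional Groemer theorem, for closed intervals. -/
lemma oneD {ι : Type*} (s : Finset ι) (a b : ι → ℝ) (c : ι → ℤ)
    (hab : ∀ i ∈ s, a i ≤ b i)
    (hzero : ∀ t : ℝ, ∑ i ∈ s, c i * (if t ∈ Set.Icc (a i) (b i) then 1 else 0) = 0) :
    ∑ i ∈ s, c i = 0 := by
  classical
  have key : ∀ v : ℝ, ∑ i ∈ s.filter (fun i => b i = v), c i = 0 := by
    intro v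
    have hε : ∃ ε : ℝ, 0 < ε ∧ ∀ w ∈ s.image a ∪ s.image b, v < w → v + ε < w := by
      by_cases h : ((s.image a ∪ s.image b).filter (fun w => v < w)).Nonempty
      · refine ⟨(((s.image a ∪ s.image b).filter (fun w => v < w)).min' h - v) / 2, ?_, ?_⟩
        · have h1 := Finset.min'_mem _ h
          have := (Finset.mem_filter.1 h1).2
          linarith
        · intro w hw hvw
          have hwg : w ∈ (s.image a ∪ s.image b).filter (fun w => v < w) :=
            Finset.mem_filter.2 ⟨hw, hvw⟩
          have hmin := Finset.min'_le _ w hwg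
          have h1 := Finset.min'_mem _ h
          have := (Finset.mem_filter.1 h1).2
          linarith
      · exact ⟨1, one_pos, fun w hw hvw => absurd ⟨w, Finset.mem_filter.2 ⟨hw, hvw⟩⟩ h⟩
    obtain ⟨ε, hεpos, hgap⟩ := hε
    have h1 := hzero v
    have h2 := hzero (v + ε)
    have hsum : ∑ i ∈ s, c i * ((if v ∈ Set.Icc (a i) (b i) then (1 : ℤ) else 0)
        - (if v + ε ∈ Set.Icc (a i) (b i) then 1 else 0)) = 0 := by
      simp only [mul_sub, Finset.sum_sub_distrib, h1, h2, sub_zero]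
    have hterm : ∀ i ∈ s, c i * ((if v ∈ Set.Icc (a i) (b i) then (1 : ℤ) else 0)
        - (if v + ε ∈ Set.Icc (a i) (b i) then 1 else 0)) = if b i = v then c i else 0 := by
      intro i hi
      have hab' := hab i hi
      have hga : v < a i → v + ε < a i := fun h =>
        hgap _ (Finset.mem_union_left _ (Finset.mem_image_of_mem a hi)) h
      have hgb : v < b i → v + ε < b i := fun h =>
        hgap _ (Finset.mem_union_right _ (Finset.mem_image_of_mem b hi)) h
      have hind : (if v ∈ Set.Icc (a i) (b i) then (1 : ℤ) else 0)
          - (if v + ε ∈ Set.Icc (a i) (b i) then 1 else 0) = if b i = v then 1 else 0 := by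
        simp only [Set.mem_Icc]
        rcases eq_or_ne (b i) v with hC | hC
        · rw [if_pos hC, if_pos ⟨le_of_le_of_eq hab' hC, hC.ge⟩,
            if_neg (fun hB => by rw [hC] at hB; linarith [hB.2])]
          norm_num
        · rw [if_neg hC]
          rcases lt_or_gt_of_ne hC with h | h
          · rw [if_neg (fun hA => absurd hA.2 (not_le.2 h)),
              if_neg (fun hB : _ ∧ _ => by linarith [hB.2])]
            norm_num
          · have hvb := hgb h
            rcases le_or_gt (a i) v with ha | ha
            · rw [if_pos ⟨ha, h.le⟩, if_pos ⟨by linarith, hvb.le⟩]; norm_num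
            · rw [if_neg (fun hA => absurd hA.1 (not_le.2 ha)),
                if_neg (fun hB : _ ∧ _ => by linarith [hB.1, hga ha])]
              norm_num
      rw [hind]
      split_ifs <;> ring
    rw [Finset.sum_congr rfl hterm] at hsum
    rw [Finset.sum_filter]
    exact hsum
  have := Finset.sum_fiberwise_of_maps_to (g := b) (t := s.image b)
    (fun i hi => Finset.mem_image_of_mem b hi) c
  rw [← this]
  exact Finset.sum_eq_zero fun v _ => key v

lemma continuous_snocfun (n : ℕ) (t : ℝ) :
    Continuous (fun y : Fin n → ℝ => (Fin.snoc y t : Fin (n + 1) → ℝ)) := by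
  apply continuous_pi
  intro j
  induction j using Fin.lastCases with
  | last => simpa [Fin.snoc_last] using continuous_const
  | cast j => simpa [Fin.snoc_castSucc] using continuous_apply (j : Fin n)

lemma continuous_initfun (n : ℕ) :
    Continuous (fun x : Fin (n + 1) → ℝ => Fin.init x) := by
  apply continuous_pi
  intro j
  exact continuous_apply _

/-- `y ↦ Fin.snoc y t` as an affine map. -/
noncomputable def snocAff (n : ℕ) (t : ℝ) : (Fin n → ℝ) →ᵃ[ℝ] (Fin (n + 1) → ℝ) where
  toFun y := Fin.snoc y t
  linear :=
    { toFun := fun y => Fin.snoc y 0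
      map_add' := by
        intro y z; ext j
        induction j using Fin.lastCases with
        | last => simp [Fin.snoc_last]
        | cast j => simp [Fin.snoc_castSucc]
      map_smul' := by
        intro r y; ext j
        induction j using Fin.lastCases with
        | last => simp [Fin.snoc_last]
        | cast j => simp [Fin.snoc_castSucc] }
  map_vadd' := by
    intro p v; ext j
    induction j using Fin.lastCases with
    | last => simp [Fin.snoc_last]
    | cast j => simp [Fin.snoc_castSucc]

open Classical in
/-- **Groemer's theorem** (integer coefficients): if finitely many nonempty compact convex
subsets of `ℝⁿ` have indicator functions summing to zero pointwise, then the coefficients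
sum to zero.  (Equivalently, the Euler characteristic is well defined on the algebra
generated by indicator functions of compact convex sets.) -/
lemma groemer : ∀ (n : ℕ) {ι : Type} (s : Finset ι) (K : ι → Set (Fin n → ℝ)) (c : ι → ℤ),
    (∀ i ∈ s, Convex ℝ (K i)) → (∀ i ∈ s, IsCompact (K i)) → (∀ i ∈ s, (K i).Nonempty) →
    (∀ x, ∑ i ∈ s, c i * (if x ∈ K i then 1 else 0) = 0) →
    ∑ i ∈ s, c i = 0 := by
  intro n
  induction n with
  | zero =>
    intro ι s K c _ _ hne hzero
    have h0 := hzero (fun _ => 0)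
    have heq : ∀ i ∈ s, c i * (if (fun _ : Fin 0 => (0 : ℝ)) ∈ K i then 1 else 0) = c i := by
      intro i hi
      obtain ⟨z, hz⟩ := hne i hi
      rw [if_pos (by rwa [Subsingleton.elim (fun _ : Fin 0 => (0 : ℝ)) z]), mul_one]
    rwa [Finset.sum_congr rfl heq] at h0
  | succ n ih =>
    intro ι s K c hconv hcomp hne hzero
    -- the projections to the last coordinate
    set J : ι → Set ℝ := fun i => (fun x : Fin (n + 1) → ℝ => x (Fin.last n)) '' K i with hJ
    have hJmem : ∀ i (t : ℝ), t ∈ J i ↔ ∃ y : Fin n → ℝ, Fin.snoc y t ∈ K i := by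
      intro i t
      constructor
      · rintro ⟨x, hx, rfl⟩
        exact ⟨Fin.init x, by rwa [Fin.snoc_init_self]⟩
      · rintro ⟨y, hy⟩
        exact ⟨Fin.snoc y t, hy, by simp [Fin.snoc_last]⟩
    -- the key claim, via slicing and the induction hypothesis
    have key : ∀ t : ℝ, ∑ i ∈ s, c i * (if t ∈ J i then 1 else 0) = 0 := by
      intro t
      set s' := s.filter (fun i => ((fun y : Fin n → ℝ => Fin.snoc y t) ⁻¹' K i).Nonempty)
        with hs'
      have hstep : ∑ i ∈ s, c i * (if t ∈ J i then 1 else 0) = ∑ i ∈ s', c i := by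
        rw [hs', Finset.sum_filter]
        refine Finset.sum_congr rfl fun i hi => ?_
        by_cases h : t ∈ J i
        · rw [if_pos h, mul_one, if_pos]
          obtain ⟨y, hy⟩ := (hJmem i t).1 h
          exact ⟨y, hy⟩
        · rw [if_neg h, mul_zero, if_neg]
          rintro ⟨y, hy⟩
          exact h ((hJmem i t).2 ⟨y, hy⟩)
      rw [hstep]
      refine ih s' (fun i => (fun y : Fin n → ℝ => Fin.snoc y t) ⁻¹' K i) c ?_ ?_ ?_ ?_
      · intro i hi
        exact (hconv i (Finset.mem_of_mem_filter i hi)).affine_preimage (snocAff n t)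
      · intro i hi
        have hKi := hcomp i (Finset.mem_of_mem_filter i hi)
        refine IsCompact.of_isClosed_subset (hKi.image (continuous_initfun n)) ?_ ?_
        · exact hKi.isClosed.preimage (continuous_snocfun n t)
        · intro y hy
          exact ⟨Fin.snoc y t, hy, by simp⟩
      · intro i hi
        exact (Finset.mem_filter.1 hi).2
      · intro y
        have h0 := hzero (Fin.snoc y t)
        have hsum2 : ∑ i ∈ s', c i * (if y ∈ (fun y : Fin n → ℝ => Fin.snoc y t) ⁻¹' K i
            then (1 : ℤ) else 0)
            = ∑ i ∈ s, c i * (if Fin.snoc y t ∈ K i then 1 else 0) := by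
          rw [hs', Finset.sum_filter]
          refine Finset.sum_congr rfl fun i hi => ?_
          by_cases h : ((fun y : Fin n → ℝ => Fin.snoc y t) ⁻¹' K i).Nonempty
          · rw [if_pos h]
            simp only [Set.mem_preimage]
          · have hni : (Fin.snoc y t : Fin (n + 1) → ℝ) ∉ K i := fun hmem => h ⟨y, hmem⟩
            rw [if_neg h, if_neg hni, mul_zero]
        rw [hsum2]
        exact h0
    -- pass to intervals and conclude by the one-dimensional case
    have hJconv : ∀ i ∈ s, Convex ℝ (J i) :=
      fun i hi => (hconv i hi).linear_image (LinearMap.proj (Fin.last n))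
    have hJcomp : ∀ i ∈ s, IsCompact (J i) :=
      fun i hi => (hcomp i hi).image (continuous_apply (Fin.last n))
    have hJne : ∀ i ∈ s, (J i).Nonempty := fun i hi => (hne i hi).image _
    have hIcc : ∀ i ∈ s, J i = Set.Icc (sInf (J i)) (sSup (J i)) := by
      intro i hi
      exact eq_Icc_of_connected_compact ⟨hJne i hi, (hJconv i hi).isPreconnected⟩ (hJcomp i hi)
    refine oneD s (fun i => sInf (J i)) (fun i => sSup (J i)) c ?_ ?_
    · intro i hi
      obtain ⟨t, ht⟩ := hJne i hi
      have h2 := (hIcc i hi) ▸ ht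
      exact le_trans h2.1 h2.2
    · intro t
      have hrw : ∑ i ∈ s, c i * (if t ∈ Set.Icc (sInf (J i)) (sSup (J i)) then (1 : ℤ) else 0)
          = ∑ i ∈ s, c i * (if t ∈ J i then 1 else 0) := by
        refine Finset.sum_congr rfl fun i hi => ?_
        by_cases h : t ∈ J i
        · rw [if_pos h, if_pos ((hIcc i hi) ▸ h)]
        · rw [if_neg h, if_neg (fun hc => h ((hIcc i hi).symm ▸ hc))]
      rw [hrw]
      exact key t

/-! ### Properties of matroid polytopes and of the matroids `M_A` -/

lemma polytope_convex {n : ℕ} (𝓑 : Finset (Finset (Fin n))) : Convex ℝ (polytope 𝓑) :=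
  convex_convexHull ℝ _

lemma polytope_isCompact {n : ℕ} (𝓑 : Finset (Finset (Fin n))) : IsCompact (polytope 𝓑) :=
  ((𝓑.finite_toSet).image _).isCompact_convexHull ℝ

lemma polytope_isClosed {n : ℕ} (𝓑 : Finset (Finset (Fin n))) : IsClosed (polytope 𝓑) :=
  (polytope_isCompact 𝓑).isClosed

open Classical in
lemma interMatroid_subset {n m : ℕ} (𝓑 : Finset (Finset (Fin n)))
    (𝓜 : Fin m → Finset (Finset (Fin n))) (A : Finset (Fin m)) :
    polytope (interMatroid 𝓑 𝓜 A) ⊆ polytope 𝓑 :=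
  convexHull_mono (Set.image_mono (by exact_mod_cast Finset.filter_subset _ 𝓑))

open Classical in
lemma interMatroid_empty {n m : ℕ} (𝓑 : Finset (Finset (Fin n)))
    (𝓜 : Fin m → Finset (Finset (Fin n))) :
    interMatroid 𝓑 𝓜 (∅ : Finset (Fin m)) = 𝓑 := by
  rw [interMatroid]
  exact Finset.filter_true_of_mem (fun B _ => fun a ha => absurd ha (Finset.notMem_empty a))

/-- Key geometric fact: for a nonempty `A`, the polytope of `interMatroid 𝓑 𝓜 A` is exactly
the intersection of the polytopes of the pieces indexed by `A`. -/
lemma interMatroid_polytope {n m : ℕ} (𝓑 : Finset (Finset (Fin n)))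
    (𝓜 : Fin m → Finset (Finset (Fin n)))
    (hsub : IsSubdivision (polytope 𝓑) fun i => polytope (𝓜 i))
    (A : Finset (Fin m)) (hA : A.Nonempty) :
    polytope (interMatroid 𝓑 𝓜 A) = ⋂ a ∈ A, polytope (𝓜 a) := by
  classical
  obtain ⟨a₀, ha₀⟩ := hA
  set F : Set (Fin n → ℝ) := ⋂ a ∈ A, polytope (𝓜 a) with hF
  refine subset_antisymm ?_ ?_
  · refine convexHull_min ?_ (convex_iInter₂ fun a _ => polytope_convex _)
    rintro x ⟨B, hB, rfl⟩
    rw [Finset.mem_coe, interMatroid, Finset.mem_filter] at hB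
    exact Set.mem_iInter₂.2 fun a ha => hB.2 a ha
  · -- `F` is an extreme subset of the piece `a₀`
    have hFeq : F = ⋂ a : {a // a ∈ A}, (polytope (𝓜 a₀) ∩ polytope (𝓜 a)) := by
      rw [hF]
      ext x
      simp only [Set.mem_iInter, Set.mem_inter_iff, Subtype.forall]
      constructor
      · intro h a ha
        exact ⟨h a₀ ha₀, h a ha⟩
      · intro h a ha
        exact (h a ha).2
    have hext : IsExtreme ℝ (polytope (𝓜 a₀)) F := by
      rw [hFeq]
      have : Nonempty {a // a ∈ A} := ⟨⟨a₀, ha₀⟩⟩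
      refine isExtreme_iInter fun a => ?_
      by_cases h : (a : Fin m) = a₀
      · simpa [h] using (IsExtreme.rfl (𝕜 := ℝ) (A := polytope (𝓜 a₀)))
      · exact ((hsub.2.2 a₀ a (fun he => h he.symm)).1).isExtreme
    have hFconv : Convex ℝ F := convex_iInter₂ fun a _ => polytope_convex _
    have hFcomp : IsCompact F := by
      refine IsCompact.of_isClosed_subset (polytope_isCompact (𝓜 a₀))
        (isClosed_biInter fun a _ => polytope_isClosed _) ?_
      exact Set.biInter_subset_of_mem ha₀
    have hextpts : F.extremePoints ℝ ⊆ indVec n '' ↑(interMatroid 𝓑 𝓜 A) := by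
      intro x hx
      have hx1 : x ∈ (polytope (𝓜 a₀)).extremePoints ℝ :=
        hext.extremePoints_subset_extremePoints hx
      have hx2 : x ∈ (polytope 𝓑).extremePoints ℝ := hsub.2.1 a₀ hx1
      have hx3 : x ∈ indVec n '' ↑𝓑 := extremePoints_convexHull_subset hx2
      obtain ⟨B, hB, rfl⟩ := hx3
      refine ⟨B, ?_, rfl⟩
      rw [Finset.mem_coe, interMatroid, Finset.mem_filter]
      exact ⟨hB, fun a ha => Set.mem_iInter₂.1 hx.1 a ha⟩
    calc F = closure (convexHull ℝ (F.extremePoints ℝ)) :=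
        (closure_convexHull_extremePoints hFcomp hFconv).symm
      _ ⊆ closure (convexHull ℝ (indVec n '' ↑(interMatroid 𝓑 𝓜 A))) :=
        closure_mono (convexHull_mono hextpts)
      _ = polytope (interMatroid 𝓑 𝓜 A) := (polytope_isClosed _).closure_eq

open Classical in
/-- For any convex closed `X ⊆ ℝⁿ`, the function `i_X(M) = 1` if `Q(M) ∩ X ≠ ∅`
and `0` otherwise is a valuation under matroid subdivisions. -/
theorem statement_8 (n : ℕ) (X : Set (Fin n → ℝ)) (hconv : Convex ℝ X) (hclosed : IsClosed X) :
    IsValuation fun 𝓑 : Finset (Finset (Fin n)) =>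
      if (polytope 𝓑 ∩ X).Nonempty then (1 : ℤ) else 0 := by
  intro m 𝓑 𝓜 hms
  classical
  obtain ⟨-, -, hsub⟩ := hms
  set Q : Finset (Fin m) → Set (Fin n → ℝ) :=
    fun A => polytope (interMatroid 𝓑 𝓜 A) ∩ X with hQ
  -- pointwise inclusion-exclusion for the indicator functions of the sets `Q A`
  have hpt : ∀ x : Fin n → ℝ,
      ∑ A : Finset (Fin m), (-1 : ℤ) ^ A.card * (if x ∈ Q A then 1 else 0) = 0 := by
    intro x
    by_cases hxX : x ∈ X
    · by_cases hxP : x ∈ polytope 𝓑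
      · -- the interesting case: the set of pieces containing `x` is nonempty
        set S := Finset.univ.filter (fun a : Fin m => x ∈ polytope (𝓜 a)) with hS
        have hSne : S.Nonempty := by
          rw [← hsub.1] at hxP
          obtain ⟨_, ⟨i, rfl⟩, hi⟩ := hxP
          exact ⟨i, Finset.mem_filter.2 ⟨Finset.mem_univ i, hi⟩⟩
        have hmem : ∀ A : Finset (Fin m), x ∈ Q A ↔ A ⊆ S := by
          intro A
          rcases A.eq_empty_or_nonempty with rfl | hAne
          · simp [hQ, interMatroid_empty, hxP, hxX, Finset.empty_subset]
          · rw [hQ]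
            simp only [Set.mem_inter_iff, hxX, and_true]
            rw [interMatroid_polytope 𝓑 𝓜 hsub A hAne]
            simp only [Set.mem_iInter]
            constructor
            · intro h a ha
              exact Finset.mem_filter.2 ⟨Finset.mem_univ a, h a ha⟩
            · intro h a ha
              exact (Finset.mem_filter.1 (h ha)).2
        have hstep : ∀ A : Finset (Fin m), (-1 : ℤ) ^ A.card * (if x ∈ Q A then 1 else 0)
            = if A ⊆ S then (-1 : ℤ) ^ A.card else 0 := by
          intro A
          by_cases h : A ⊆ S
          · rw [if_pos h, if_pos ((hmem A).2 h), mul_one]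
          · rw [if_neg h, if_neg (fun hx => h ((hmem A).1 hx)), mul_zero]
        rw [Finset.sum_congr rfl fun A _ => hstep A, ← Finset.sum_filter]
        have hpows : Finset.univ.filter (fun A : Finset (Fin m) => A ⊆ S) = S.powerset := by
          ext A
          simp [Finset.mem_powerset]
        rw [hpows]
        exact Finset.sum_powerset_neg_one_pow_card_of_nonempty hSne
      · have h0 : ∀ A : Finset (Fin m), x ∉ Q A := fun A hx =>
          hxP (interMatroid_subset 𝓑 𝓜 A hx.1)
        simp [h0]
    · have h0 : ∀ A : Finset (Fin m), x ∉ Q A := fun A hx => hxX hx.2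
      simp [h0]
  -- apply Groemer's theorem to the nonempty ones among the sets `Q A`
  have hkey : ∑ A ∈ Finset.univ.filter (fun A : Finset (Fin m) => (Q A).Nonempty),
      (-1 : ℤ) ^ A.card = 0 := by
    refine groemer n _ Q (fun A => (-1) ^ A.card) ?_ ?_ ?_ ?_
    · exact fun A _ => (polytope_convex _).inter hconv
    · exact fun A _ => (polytope_isCompact _).inter_right hclosed
    · exact fun A hA => (Finset.mem_filter.1 hA).2
    · intro x
      rw [Finset.sum_filter_of_ne]
      · refine Eq.trans ?_ (hpt x)
        refine Finset.sum_congr rfl fun A _ => ?_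
        by_cases h : x ∈ Q A
        · rw [if_pos h, if_pos h]
        · rw [if_neg h, if_neg h]
      · intro A _ hne
        by_contra h0
        rw [if_neg (fun hx => h0 ⟨x, hx⟩), mul_zero] at hne
        exact hne rfl
  -- finish: rewrite the valuation sum as a sum over the nonempty `Q A`
  have hfin : ∀ A : Finset (Fin m),
      (-1 : ℤ) ^ A.card • (if (polytope (interMatroid 𝓑 𝓜 A) ∩ X).Nonempty then (1 : ℤ) else 0)
      = if (Q A).Nonempty then (-1 : ℤ) ^ A.card else 0 := by
    intro A
    rw [hQ, smul_eq_mul]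
    by_cases h : (polytope (interMatroid 𝓑 𝓜 A) ∩ X).Nonempty
    · rw [if_pos h, if_pos h, mul_one]
    · rw [if_neg h, if_neg h, mul_zero]
  rw [Finset.sum_congr rfl fun A _ => hfin A, ← Finset.sum_filter]
  exact hkey
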